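/- Suppose S : ℝ → M_{n×n}(ℝ) is C¹, symmetric positive definite with C₁ e^{-2φ₁|t|} I ≤ S(t) ≤ C₂ e^{2φ₂|t|} I for constants C₁, C₂ > 0, φ₁, φ₂ ≥ 0, and suppose Ṡ(t) + V(t)ᵀS(t) + S(t)V(t) ≤ -(I + L·S(t)) for some constant L > 2φ₁. Then the system ẋ = V(t)x is nonuniformly exponentially stable forward: there exists M ≥ 1 such that ‖Φ_V(t,s)‖ ≤ M e^{(φ₁+φ₂)|s|} e^{-(L/2 - φ₁)(t-s)} for all t ≥ s. -/

import Mathlib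

open scoped Matrix.Norms.L2Operator
open Matrix Real

private lemma entry_hasDerivAt {n : ℕ} {A : ℝ → Matrix (Fin n) (Fin n) ℝ}
    {A' : Matrix (Fin n) (Fin n) ℝ} {t : ℝ} (h : HasDerivAt A A' t) (i j : Fin n) :
    HasDerivAt (fun t => A t i j) (A' i j) t := by
  let e : Matrix (Fin n) (Fin n) ℝ →ₗ[ℝ] ℝ :=
    (LinearMap.proj j).comp (LinearMap.proj i :
      Matrix (Fin n) (Fin n) ℝ →ₗ[ℝ] (Fin n → ℝ))
  exact (LinearMap.toContinuousLinearMap e).hasFDerivAt.comp_hasDerivAt t h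

private lemma dotSelf_nonneg {n : ℕ} (x : Fin n → ℝ) : 0 ≤ x ⬝ᵥ x :=
  Finset.sum_nonneg fun i _ => mul_self_nonneg _

private lemma exp_cancel (C₁ C₂ q p1 p2 p3 : ℝ) (hC₁ : C₁ ≠ 0) :
    C₂ * Real.exp p1 * q * Real.exp p3 =
      C₁ * Real.exp (-p2) * (C₂ / C₁ * Real.exp (p1 + p2 + p3) * q) := by
  rw [Real.exp_add, Real.exp_add, Real.exp_neg]
  field_simp [Real.exp_ne_zero]

private lemma norm_sq_eq_dot {n : ℕ} (z : EuclideanSpace ℝ (Fin n)) :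
    ‖z‖ ^ 2 = (WithLp.equiv 2 (Fin n → ℝ) z) ⬝ᵥ (WithLp.equiv 2 (Fin n → ℝ) z) := by
  rw [EuclideanSpace.norm_eq, Real.sq_sqrt (by positivity)]
  simp [dotProduct, Real.norm_eq_abs, sq_abs, pow_two]

/-- if a C¹ symmetric positive definite `S(t)` satisfies
`C₁ e^{-2φ₁|t|} I ≤ S(t) ≤ C₂ e^{2φ₂|t|} I` and the Riccati-type inequality
`Ṡ(t) + V(t)ᵀS(t) + S(t)V(t) ≤ -(I + L·S(t))` with `L > 2φ₁`, then `ẋ = V(t)x` is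
nonuniformly exponentially stable forward:
`‖Φ_V(t,s)‖ ≤ M e^{(φ₁+φ₂)|s|} e^{-(L/2 - φ₁)(t-s)}` for all `t ≥ s`. -/
theorem riccati_implies_nues_forward {n : ℕ}
    (V : ℝ → Matrix (Fin n) (Fin n) ℝ)
    (hVmeas : ∀ i j, Measurable fun t => V t i j)
    (hVbdd : ∀ r : ℝ, ∃ K : ℝ, ∀ t ∈ Set.Icc (-r) r, ‖V t‖ ≤ K)
    (Φ : ℝ → ℝ → Matrix (Fin n) (Fin n) ℝ)
    (hΦ0 : ∀ s, Φ s s = 1)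
    (hΦ : ∀ s t, HasDerivAt (fun r => Φ r s) (V t * Φ t s) t)
    (S S' : ℝ → Matrix (Fin n) (Fin n) ℝ)
    (hS' : ∀ t, HasDerivAt S (S' t) t)
    (hS'cont : Continuous S')
    (hSpd : ∀ t, (S t).PosDef)
    (C₁ C₂ φ₁ φ₂ L : ℝ)
    (hC₁ : 0 < C₁) (hC₂ : 0 < C₂) (hφ₁ : 0 ≤ φ₁) (hφ₂ : 0 ≤ φ₂)
    (hL : 2 * φ₁ < L)
    (hSlower : ∀ t, (S t - (C₁ * exp (-2 * φ₁ * |t|)) •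
        (1 : Matrix (Fin n) (Fin n) ℝ)).PosSemidef)
    (hSupper : ∀ t, ((C₂ * exp (2 * φ₂ * |t|)) • (1 : Matrix (Fin n) (Fin n) ℝ) -
        S t).PosSemidef)
    (hRiccati : ∀ t, (-(1 + L • S t) -
        (S' t + (V t)ᵀ * S t + S t * V t)).PosSemidef) :
    ∃ M : ℝ, 1 ≤ M ∧ ∀ t s : ℝ, s ≤ t →
      ‖Φ t s‖ ≤ M * exp ((φ₁ + φ₂) * |s|) * exp (-(L / 2 - φ₁) * (t - s)) := by
  classical
  set M : ℝ := max 1 (Real.sqrt (C₂ / C₁)) with hMdef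
  have hM1 : (1:ℝ) ≤ M := le_max_left _ _
  have hM0 : (0:ℝ) < M := lt_of_lt_of_le one_pos hM1
  have hMsq : C₂ / C₁ ≤ M ^ 2 := by
    have h1 : Real.sqrt (C₂ / C₁) ≤ M := le_max_right _ _
    have h2 := Real.sq_sqrt (le_of_lt (div_pos hC₂ hC₁))
    nlinarith [Real.sqrt_nonneg (C₂ / C₁)]
  refine ⟨M, hM1, ?_⟩
  intro t s hst
  set B : ℝ := M * exp ((φ₁ + φ₂) * |s|) * exp (-(L / 2 - φ₁) * (t - s)) with hBdef
  have hB0 : 0 ≤ B := by positivity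
  have key : ∀ x₀ : Fin n → ℝ, (Φ t s *ᵥ x₀) ⬝ᵥ (Φ t s *ᵥ x₀) ≤ B ^ 2 * (x₀ ⬝ᵥ x₀) := by
    intro x₀
    set x : ℝ → Fin n → ℝ := fun r => Φ r s *ᵥ x₀ with hxdef
    set v : ℝ → ℝ := fun r => x r ⬝ᵥ (S r *ᵥ x r) with hvdef
    have hx : ∀ r i, HasDerivAt (fun u => x u i) ((V r *ᵥ x r) i) r := by
      intro r i
      have h1 : HasDerivAt (fun u => ∑ j, Φ u s i j * x₀ j)
          (∑ j, (V r * Φ r s) i j * x₀ j) r :=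
        HasDerivAt.fun_sum fun j _ => (entry_hasDerivAt (hΦ s r) i j).mul_const (x₀ j)
      have h2 : (fun u => ∑ j, Φ u s i j * x₀ j) = fun u => x u i := by
        funext u; simp [hxdef, Matrix.mulVec, dotProduct]
      have h3 : (∑ j, (V r * Φ r s) i j * x₀ j) = (V r *ᵥ x r) i := by
        rw [hxdef]
        simp only [Matrix.mulVec_mulVec]
        simp [Matrix.mulVec, dotProduct]
      rw [h2, h3] at h1; exact h1
    have hv : ∀ r, HasDerivAt v
        ((V r *ᵥ x r) ⬝ᵥ (S r *ᵥ x r) +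
          (x r ⬝ᵥ (S' r *ᵥ x r) + x r ⬝ᵥ (S r *ᵥ (V r *ᵥ x r)))) r := by
      intro r
      have h1 : HasDerivAt (fun u => ∑ i, x u i * ∑ j, S u i j * x u j)
          (∑ i, ((V r *ᵥ x r) i * (∑ j, S r i j * x r j) +
            x r i * (∑ j, (S' r i j * x r j + S r i j * (V r *ᵥ x r) j)))) r := by
        refine HasDerivAt.fun_sum fun i _ => HasDerivAt.mul (hx r i)
          (HasDerivAt.fun_sum fun j _ => ?_)
        exact (entry_hasDerivAt (hS' r) i j).mul (hx r j)
      have h2 : (fun u => ∑ i, x u i * ∑ j, S u i j * x u j) = v := by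
        funext u; simp [hvdef, dotProduct, Matrix.mulVec]
      have h3 : (∑ i, ((V r *ᵥ x r) i * (∑ j, S r i j * x r j) +
            x r i * (∑ j, (S' r i j * x r j + S r i j * (V r *ᵥ x r) j)))) =
          (V r *ᵥ x r) ⬝ᵥ (S r *ᵥ x r) +
            (x r ⬝ᵥ (S' r *ᵥ x r) + x r ⬝ᵥ (S r *ᵥ (V r *ᵥ x r))) := by
        simp [dotProduct, Matrix.mulVec, Finset.sum_add_distrib, mul_add]
      rw [h2, h3] at h1; exact h1
    have hineq : ∀ r, (V r *ᵥ x r) ⬝ᵥ (S r *ᵥ x r) +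
        (x r ⬝ᵥ (S' r *ᵥ x r) + x r ⬝ᵥ (S r *ᵥ (V r *ᵥ x r))) ≤ -L * v r := by
      intro r
      have hq := (hRiccati r).dotProduct_mulVec_nonneg (x r)
      rw [star_trivial] at hq
      have hxx : 0 ≤ x r ⬝ᵥ x r := dotSelf_nonneg _
      have e1 : (V r *ᵥ x r) ⬝ᵥ (S r *ᵥ x r) = x r ⬝ᵥ (((V r)ᵀ * S r) *ᵥ x r) := by
        rw [← Matrix.mulVec_mulVec, Matrix.dotProduct_mulVec (x r) ((V r)ᵀ),
          Matrix.vecMul_transpose]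
      have e2 : x r ⬝ᵥ ((S r * V r) *ᵥ x r) = x r ⬝ᵥ (S r *ᵥ (V r *ᵥ x r)) := by
        conv_rhs => rw [Matrix.mulVec_mulVec]
      simp only [Matrix.sub_mulVec, Matrix.add_mulVec, Matrix.neg_mulVec,
        Matrix.one_mulVec, Matrix.smul_mulVec, dotProduct_sub,
        dotProduct_add, dotProduct_neg, dotProduct_smul,
        smul_eq_mul] at hq
      rw [e1.symm, e2] at hq
      simp only [hvdef]
      linarith
    -- Gronwall
    set g : ℝ → ℝ := fun r => v r * exp (L * r) with hgdef
    have hexpd : ∀ r : ℝ, HasDerivAt (fun u : ℝ => exp (L * u)) (exp (L * r) * L) r := by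
      intro r
      have h0 : HasDerivAt (fun u : ℝ => L * u) L r := by
        simpa using (hasDerivAt_id r).const_mul L
      exact (Real.hasDerivAt_exp (L * r)).comp r h0
    have hg : ∀ r, HasDerivAt g
        (((V r *ᵥ x r) ⬝ᵥ (S r *ᵥ x r) +
          (x r ⬝ᵥ (S' r *ᵥ x r) + x r ⬝ᵥ (S r *ᵥ (V r *ᵥ x r)))) * exp (L * r) +
          v r * (exp (L * r) * L)) r := fun r => (hv r).mul (hexpd r)
    have hanti : Antitone g := by
      refine antitone_of_deriv_nonpos (fun r => (hg r).differentiableAt) (fun r => ?_)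
      rw [(hg r).deriv]
      have h1 := hineq r
      have h2 : (0:ℝ) < exp (L * r) := Real.exp_pos _
      nlinarith [mul_le_mul_of_nonneg_right h1 h2.le]
    have hgle : g t ≤ g s := hanti hst
    -- bounds
    have hlow : C₁ * exp (-2 * φ₁ * |t|) * (x t ⬝ᵥ x t) ≤ v t := by
      have h := (hSlower t).dotProduct_mulVec_nonneg (x t)
      rw [star_trivial] at h
      simp only [Matrix.sub_mulVec, Matrix.smul_mulVec, Matrix.one_mulVec,
        dotProduct_sub, dotProduct_smul, smul_eq_mul] at h
      simp only [hvdef]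
      linarith
    have hxs : x s = x₀ := by rw [hxdef]; simp [hΦ0 s]
    have hup : v s ≤ C₂ * exp (2 * φ₂ * |s|) * (x₀ ⬝ᵥ x₀) := by
      have h := (hSupper s).dotProduct_mulVec_nonneg (x s)
      rw [star_trivial] at h
      simp only [Matrix.sub_mulVec, Matrix.smul_mulVec, Matrix.one_mulVec,
        dotProduct_sub, dotProduct_smul, smul_eq_mul] at h
      simp only [hvdef]
      rw [← hxs]
      linarith
    have h5 : v t ≤ v s * exp (-L * (t - s)) := by
      have hstep := mul_le_mul_of_nonneg_right hgle (Real.exp_pos (-(L * t))).le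
      simp only [hgdef] at hstep
      calc v t = v t * exp (L * t) * exp (-(L * t)) := by
            rw [mul_assoc, ← Real.exp_add]; simp
        _ ≤ v s * exp (L * s) * exp (-(L * t)) := hstep
        _ = v s * exp (-L * (t - s)) := by
            rw [mul_assoc, ← Real.exp_add]; ring_nf
    have h6 : C₁ * exp (-2 * φ₁ * |t|) * (x t ⬝ᵥ x t) ≤
        C₂ * exp (2 * φ₂ * |s|) * (x₀ ⬝ᵥ x₀) * exp (-L * (t - s)) :=
      hlow.trans (h5.trans (mul_le_mul_of_nonneg_right hup (Real.exp_pos _).le))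
    have h7 : x t ⬝ᵥ x t ≤
        (C₂ / C₁) * exp (2 * φ₂ * |s| + 2 * φ₁ * |t| - L * (t - s)) * (x₀ ⬝ᵥ x₀) := by
      have hc : (0:ℝ) < C₁ * exp (-2 * φ₁ * |t|) := by positivity
      rw [← mul_le_mul_iff_right₀ hc]
      calc C₁ * exp (-2 * φ₁ * |t|) * (x t ⬝ᵥ x t)
          ≤ C₂ * exp (2 * φ₂ * |s|) * (x₀ ⬝ᵥ x₀) * exp (-L * (t - s)) := h6
        _ = C₁ * exp (-2 * φ₁ * |t|) *
            ((C₂ / C₁) * exp (2 * φ₂ * |s| + 2 * φ₁ * |t| - L * (t - s)) * (x₀ ⬝ᵥ x₀)) := by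
            rw [show -2 * φ₁ * |t| = -(2 * φ₁ * |t|) by ring,
              show -L * (t - s) = -(L * (t - s)) by ring,
              show 2 * φ₂ * |s| + 2 * φ₁ * |t| - L * (t - s) =
                2 * φ₂ * |s| + 2 * φ₁ * |t| + -(L * (t - s)) by ring]
            exact exp_cancel C₁ C₂ _ _ _ _ hC₁.ne'
    have habs : |t| ≤ |s| + (t - s) := by
      have h1 := abs_sub_abs_le_abs_sub t s
      rw [abs_of_nonneg (by linarith : (0:ℝ) ≤ t - s)] at h1
      linarith
    have hexple : exp (2 * φ₂ * |s| + 2 * φ₁ * |t| - L * (t - s)) ≤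
        exp (2 * (φ₁ + φ₂) * |s| - (L - 2 * φ₁) * (t - s)) := by
      apply Real.exp_le_exp.mpr
      nlinarith [mul_le_mul_of_nonneg_left habs (by linarith : (0:ℝ) ≤ 2 * φ₁)]
    have hBsq : B ^ 2 = M ^ 2 * exp (2 * (φ₁ + φ₂) * |s| - (L - 2 * φ₁) * (t - s)) := by
      rw [hBdef, mul_pow, mul_pow, pow_two (exp ((φ₁ + φ₂) * |s|)),
        pow_two (exp (-(L / 2 - φ₁) * (t - s))), ← Real.exp_add, ← Real.exp_add,
        mul_assoc, ← Real.exp_add]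
      congr 1
      ring
    calc x t ⬝ᵥ x t
        ≤ (C₂ / C₁) * exp (2 * φ₂ * |s| + 2 * φ₁ * |t| - L * (t - s)) * (x₀ ⬝ᵥ x₀) := h7
      _ ≤ B ^ 2 * (x₀ ⬝ᵥ x₀) := by
          apply mul_le_mul_of_nonneg_right _ (dotSelf_nonneg x₀)
          rw [hBsq]
          exact mul_le_mul hMsq hexple (Real.exp_pos _).le (by positivity)
  -- conclude operator norm bound
  rw [Matrix.l2_opNorm_def]
  refine ContinuousLinearMap.opNorm_le_bound _ hB0 fun y => ?_
  have h1 : ‖(Matrix.toEuclideanLin (Φ t s)) y‖ ^ 2 ≤ (B * ‖y‖) ^ 2 := by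
    rw [norm_sq_eq_dot]
    have h2 : WithLp.equiv 2 (Fin n → ℝ) ((Matrix.toEuclideanLin (Φ t s)) y) =
        Φ t s *ᵥ (WithLp.equiv 2 (Fin n → ℝ) y) := rfl
    rw [h2, mul_pow, norm_sq_eq_dot y]
    exact key _
  have h3 := Real.sqrt_le_sqrt h1
  rw [Real.sqrt_sq (norm_nonneg _), Real.sqrt_sq (by positivity)] at h3
  exact h3
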